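/- Let G = (V, E) be a simple undirected graph and let Ĝ be the graph on vertex set V × {1,2,3,4} whose edges are: {(x,i), (y,i+1)} for every edge {x,y} ∈ E and every i ∈ {1,2,3}, together with the matching edges {(x,1), (x,4)} for every x ∈ V. Then every 4-cycle of Ĝ that contains a matching edge {(x,1),(x,4)} is of the form (x,1), (y,2), (z,3), (x,4) for some y, z ∈ V such that {x,y}, {y,z}, {z,x} ∈ E; in particular, (x, y, z) is a triangle in G. -/

import Mathlib

/-- The graph `Ĝ` on vertex set `V × {1,2,3,4}` (here `Fin 4 = {0,1,2,3}`):
for every edge `{x,y}` of `G` and every `i ∈ {1,2,3}` there is an edge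
`{(x,i), (y,i+1)}`, and additionally there are the matching edges
`{(x,1), (x,4)}` for every `x ∈ V`. -/
def hatGraph {V : Type*} (G : SimpleGraph V) : SimpleGraph (V × Fin 4) where
  Adj u v :=
    (G.Adj u.1 v.1 ∧
      ((u.2 = 0 ∧ v.2 = 1) ∨ (u.2 = 1 ∧ v.2 = 2) ∨ (u.2 = 2 ∧ v.2 = 3) ∨
       (v.2 = 0 ∧ u.2 = 1) ∨ (v.2 = 1 ∧ u.2 = 2) ∨ (v.2 = 2 ∧ u.2 = 3))) ∨
    (u.1 = v.1 ∧ ((u.2 = 0 ∧ v.2 = 3) ∨ (u.2 = 3 ∧ v.2 = 0)))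
  symm := by
    constructor
    rintro u v (⟨hadj, h⟩ | ⟨heq, h⟩)
    · exact Or.inl ⟨hadj.symm, by tauto⟩
    · exact Or.inr ⟨heq.symm, by tauto⟩
  loopless := by
    constructor
    rintro u (⟨hadj, -⟩ | ⟨-, (⟨h0, h3⟩ | ⟨h0, h3⟩)⟩)
    · exact G.irrefl hadj
    all_goals rw [h0] at h3; exact absurd h3 (by decide)

/-- Every 4-cycle of `Ĝ` through a matching edge `{(x,1), (x,4)}` comes from a
triangle of `G`: if `(x,1), u, v, (x,4)` are pairwise distinct and consecutive
pairs (as well as `{(x,4), (x,1)}`) are edges of `Ĝ`, then `u = (y,2)` and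
`v = (z,3)` for some `y, z ∈ V` with `{x,y}, {y,z}, {z,x}` edges of `G`,
i.e. `(x, y, z)` is a triangle in `G`. -/
theorem fourCycle_matching_edge_gives_triangle {V : Type*} (G : SimpleGraph V)
    (x : V) (u v : V × Fin 4)
    (hd1 : (x, (0 : Fin 4)) ≠ u) (hd2 : (x, (0 : Fin 4)) ≠ v)
    (hd3 : u ≠ v) (hd4 : u ≠ (x, (3 : Fin 4))) (hd5 : v ≠ (x, (3 : Fin 4)))
    (h1 : (hatGraph G).Adj (x, 0) u) (h2 : (hatGraph G).Adj u v)
    (h3 : (hatGraph G).Adj v (x, 3)) :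
    ∃ y z : V, u = (y, 1) ∧ v = (z, 2) ∧ G.Adj x y ∧ G.Adj y z ∧ G.Adj z x := by
  obtain ⟨y, i⟩ := u
  obtain ⟨z, j⟩ := v
  simp only [hatGraph] at h1 h2 h3
  fin_cases i <;> fin_cases j <;>
    simp only [Prod.mk.injEq, and_true, and_false, false_and, true_and, not_and,
      show ((0:Fin 4) = 0) = True from by simp, show ((1:Fin 4) = 0) = False from by decide,
      show ((2:Fin 4) = 0) = False from by decide, show ((3:Fin 4) = 0) = False from by decide,
      show ((0:Fin 4) = 1) = False from by decide, show ((1:Fin 4) = 1) = True from by simp,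
      show ((2:Fin 4) = 1) = False from by decide, show ((3:Fin 4) = 1) = False from by decide,
      show ((0:Fin 4) = 2) = False from by decide, show ((1:Fin 4) = 2) = False from by decide,
      show ((2:Fin 4) = 2) = True from by simp, show ((3:Fin 4) = 2) = False from by decide,
      show ((0:Fin 4) = 3) = False from by decide, show ((1:Fin 4) = 3) = False from by decide,
      show ((2:Fin 4) = 3) = False from by decide, show ((3:Fin 4) = 3) = True from by simp,
      or_false, false_or, and_true, and_false, or_self] at h1 h2 h3 hd1 hd2 hd4 hd5 ⊢
  all_goals first
    | exact absurd h1.1 (G.irrefl ∘ (h1.2 ▸ ·)) 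
    | tauto
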